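/- Let V be the two-ended-stack value function: V([]) = 0 and V(l) = max(head(l) − V(tail(l)), last(l) − V(init(l))) for nonempty l. Define the cycle value W(a_1, …, a_n) = max_{1 ≤ i ≤ n} (a_i − V(a_{i+1}, …, a_n, a_1, …, a_{i−1})). If n is even, then W(a_1, …, a_n) ≥ 0 for every sequence (a_1, …, a_n). -/

import Mathlib

/-- The value of the two-ended stack game: the player to move takes the left or right
end, maximizing own total minus opponent's. -/
noncomputable def tesVal : List ℝ → ℝ
  | [] => 0
  | a :: l =>
      max (a - tesVal l)
        ((a :: l).getLast (List.cons_ne_nil a l) - tesVal ((a :: l).dropLast))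
  termination_by l => l.length
  decreasing_by
  · simp
  · simp [List.length_dropLast]

/-- The value of the cycle game: the first player removes any vertex, after which the
game is the two-ended stack on the remaining arc. -/
noncomputable def cycVal (a : List ℝ) : ℝ :=
  (((List.range a.length).map fun i =>
      a.getD i 0 - tesVal ((a.rotate i).tail)).maximum).unbotD 0

/-- Alternating sum of a list. -/
noncomputable def altSum : List ℝ → ℝ
  | [] => 0
  | a :: l => a - altSum l

lemma altSum_append_singleton (l : List ℝ) (x : ℝ) :
    altSum (l ++ [x]) = altSum l + (-1) ^ l.length * x := by
  induction l with
  | nil => simp [altSum]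
  | cons a t ih => simp [altSum, ih, pow_succ]; ring

lemma tesVal_altSum : ∀ (n : ℕ) (l : List ℝ), l.length = n →
    (Odd n → tesVal l ≤ altSum l) ∧
    (Even n → altSum l ≤ tesVal l ∧ -altSum l ≤ tesVal l) := by
  intro n
  induction n using Nat.strong_induction_on with
  | _ n ih =>
    intro l hl
    match l with
    | [] =>
      subst hl
      simp [tesVal, altSum, Nat.odd_iff]
    | a :: t =>
      have hn : n = t.length + 1 := by simpa using hl.symm
      rw [tesVal]
      set L := (a :: t).getLast (List.cons_ne_nil a t) with hL
      have hd : (a :: t).dropLast ++ [L] = a :: t :=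
        List.dropLast_append_getLast (List.cons_ne_nil a t)
      have hlen : (a :: t).dropLast.length = t.length := by simp
      constructor
      · intro hodd
        have ht : Even t.length := by
          rw [hn, Nat.odd_add_one] at hodd
          exact Nat.not_odd_iff_even.mp hodd
        have ihT := ((ih t.length (by omega) t rfl).2 ht).1
        have ihD := ((ih t.length (by omega) (a :: t).dropLast hlen).2 ht).2
        have heq : altSum (a :: t) = altSum ((a :: t).dropLast) + L := by
          conv_lhs => rw [← hd]
          rw [altSum_append_singleton, hlen, Even.neg_one_pow ht, one_mul]
        apply max_le
        · have : a - tesVal t ≤ a - altSum t := by linarith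
          simpa [altSum] using this
        · rw [heq]; linarith
      · intro heven
        have ht : Odd t.length := by
          rw [hn, Nat.even_add_one, Nat.not_even_iff_odd] at heven
          exact heven
        have ihT := (ih t.length (by omega) t rfl).1 ht
        have ihD := (ih t.length (by omega) (a :: t).dropLast hlen).1 ht
        have heq : altSum (a :: t) = altSum ((a :: t).dropLast) - L := by
          conv_lhs => rw [← hd]
          rw [altSum_append_singleton, hlen, Odd.neg_one_pow ht]
          ring
        constructor
        · have h1 : altSum (a :: t) ≤ a - tesVal t := by
            simp only [altSum]; linarith
          exact h1.trans (le_max_left _ _)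
        · have h1 : -altSum (a :: t) ≤ L - tesVal ((a :: t).dropLast) := by
            rw [heq]; linarith
          exact h1.trans (le_max_right _ _)

/-- Every even cycle game has nonnegative value (color strategy). -/
theorem cycVal_nonneg_of_even (a : List ℝ) (h : Even a.length) :
    0 ≤ cycVal a := by
  match a with
  | [] => simp [cycVal]
  | [x] => simp [Nat.even_iff] at h
  | x :: y :: t =>
    have ht : Even t.length := by
      rcases h with ⟨k, hk⟩
      simp only [List.length_cons] at hk
      exact ⟨k - 1, by omega⟩
    set f : ℕ → ℝ := fun i =>
      (x :: y :: t).getD i 0 - tesVal (((x :: y :: t).rotate i).tail) with hf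
    have h0 : f 0 = x - tesVal (y :: t) := by simp [hf]
    have h1 : f 1 = y - tesVal (t ++ [x]) := by
      simp [hf, List.rotate_cons_succ]
    have hyt : Odd (y :: t).length := by simpa using Even.add_one ht
    have htx : Odd (t ++ [x]).length := by simpa using Even.add_one ht
    have b0 : x - altSum (y :: t) ≤ f 0 := by
      have := (tesVal_altSum _ (y :: t) rfl).1 hyt
      rw [h0]; linarith
    have b1 : y - altSum (t ++ [x]) ≤ f 1 := by
      have := (tesVal_altSum _ (t ++ [x]) rfl).1 htx
      rw [h1]; linarith
    have hsum : (x - altSum (y :: t)) + (y - altSum (t ++ [x])) = 0 := by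
      rw [altSum_append_singleton, Even.neg_one_pow ht, one_mul]
      simp [altSum]; ring
    set Lst := (List.range (x :: y :: t).length).map f with hLst
    have m0 : f 0 ∈ Lst := List.mem_map_of_mem (f := f) (by simp)
    have m1 : f 1 ∈ Lst := List.mem_map_of_mem (f := f) (by simp)
    have hc : cycVal (x :: y :: t) = Lst.maximum.unbotD 0 := rfl
    rw [hc]
    cases hM : Lst.maximum with
    | bot =>
      exact absurd (hM ▸ List.le_maximum_of_mem' m0) (by simp)
    | coe m =>
      have e0 : f 0 ≤ m := by
        have := hM ▸ List.le_maximum_of_mem' m0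
        exact_mod_cast this
      have e1 : f 1 ≤ m := by
        have := hM ▸ List.le_maximum_of_mem' m1
        exact_mod_cast this
      simp only [WithBot.unbotD_coe]
      linarith
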